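/- Uniqueness of the dissolution ODE: if ρ > 0 and u_1 ≥ u_2 ≥ … ≥ 0 satisfy Σ_i u_i ≤ ρ, and (v_i)_{i≥1} and (w_i)_{i≥1} are two families of measurable functions v_i, w_i : ℝ≥0 → [0, u_i] each satisfying v_i(t) = (u_i − ∫₀ᵗ ds/(1 + ρ − Σ_j v_j(s)))₊ for all t ≥ 0 (and similarly for w), then v_i(t) = w_i(t) for all i ≥ 1 and t ≥ 0. -/

import Mathlib

open MeasureTheory Set

private lemma diss_summable {u : ℕ → ℝ} (hu_sum : Summable u)
    {v : ℕ → ℝ → ℝ} (hv_mem : ∀ i t, 0 ≤ t → v i t ∈ Set.Icc 0 (u i))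
    {s : ℝ} (hs : 0 ≤ s) : Summable fun j => v j s :=
  hu_sum.of_nonneg_of_le (fun j => (hv_mem j s hs).1) (fun j => (hv_mem j s hs).2)

private lemma diss_one_le {ρ : ℝ} {u : ℕ → ℝ}
    (hu_sum : Summable u) (hu_le : (∑' i, u i) ≤ ρ)
    {v : ℕ → ℝ → ℝ} (hv_mem : ∀ i t, 0 ≤ t → v i t ∈ Set.Icc 0 (u i))
    {s : ℝ} (hs : 0 ≤ s) : 1 ≤ 1 + ρ - ∑' j, v j s := by
  have h1 : (∑' j, v j s) ≤ ∑' j, u j :=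
    Summable.tsum_le_tsum (fun j => (hv_mem j s hs).2) (diss_summable hu_sum hv_mem hs) hu_sum
  linarith

private lemma diss_norm_le {ρ : ℝ} {u : ℕ → ℝ}
    (hu_sum : Summable u) (hu_le : (∑' i, u i) ≤ ρ)
    {v : ℕ → ℝ → ℝ} (hv_mem : ∀ i t, 0 ≤ t → v i t ∈ Set.Icc 0 (u i))
    {s : ℝ} (hs : 0 ≤ s) : ‖(1 + ρ - ∑' j, v j s)⁻¹‖ ≤ 1 := by
  have h1 : (1:ℝ) ≤ 1 + ρ - ∑' j, v j s := diss_one_le hu_sum hu_le hv_mem hs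
  rw [Real.norm_eq_abs, abs_of_nonneg (inv_nonneg.2 (by linarith))]
  exact inv_le_one_of_one_le₀ h1

private lemma diss_integrable {ρ : ℝ} {u : ℕ → ℝ}
    (hu_sum : Summable u) (hu_le : (∑' i, u i) ≤ ρ)
    {v : ℕ → ℝ → ℝ} (hv_meas : ∀ i, Measurable (v i))
    (hv_mem : ∀ i t, 0 ≤ t → v i t ∈ Set.Icc 0 (u i))
    {a b : ℝ} (ha : 0 ≤ a) (hab : a ≤ b) :
    IntervalIntegrable (fun s => (1 + ρ - ∑' j, v j s)⁻¹) volume a b := by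
  rw [intervalIntegrable_iff, uIoc_of_le hab]
  constructor
  · refine aestronglyMeasurable_of_tendsto_ae (u := Filter.atTop)
      (f := fun n s => (1 + ρ - ∑ j ∈ Finset.range n, v j s)⁻¹) ?_ ?_
    · intro n
      exact ((measurable_const.sub
        (Finset.measurable_sum _ fun j _ => hv_meas j)).inv).aestronglyMeasurable
    · refine (ae_restrict_mem measurableSet_Ioc).mono fun s hs => ?_
      have hs0 : (0:ℝ) ≤ s := le_trans ha hs.1.le
      have hsum := (diss_summable hu_sum hv_mem hs0).hasSum
      have h1 : (1:ℝ) ≤ 1 + ρ - ∑' j, v j s := diss_one_le hu_sum hu_le hv_mem hs0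
      exact (Filter.Tendsto.const_sub _ hsum.tendsto_sum_nat).inv₀ (by linarith)
  · refine HasFiniteIntegral.of_bounded (C := 1) ?_
    refine (ae_restrict_mem measurableSet_Ioc).mono fun s hs => ?_
    exact diss_norm_le hu_sum hu_le hv_mem (le_trans ha hs.1.le)

/-- Key one-sided comparison: the primitive for `v` is `≤` that for `w`. -/
private lemma diss_key
    (ρ : ℝ) (hρ : 0 < ρ)
    (u : ℕ → ℝ) (hu_nonneg : ∀ i, 0 ≤ u i)
    (hu_sum : Summable u) (hu_le : (∑' i, u i) ≤ ρ)
    (v w : ℕ → ℝ → ℝ)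
    (hv_meas : ∀ i, Measurable (v i)) (hw_meas : ∀ i, Measurable (w i))
    (hv_mem : ∀ i t, 0 ≤ t → v i t ∈ Set.Icc 0 (u i))
    (hw_mem : ∀ i t, 0 ≤ t → w i t ∈ Set.Icc 0 (u i))
    (hv_eq : ∀ i t, 0 ≤ t →
      v i t = max (u i - ∫ s in (0 : ℝ)..t, (1 + ρ - ∑' j, v j s)⁻¹) 0)
    (hw_eq : ∀ i t, 0 ≤ t →
      w i t = max (u i - ∫ s in (0 : ℝ)..t, (1 + ρ - ∑' j, w j s)⁻¹) 0) :
    ∀ t, 0 ≤ t →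
      (∫ s in (0 : ℝ)..t, (1 + ρ - ∑' j, v j s)⁻¹) ≤
        ∫ s in (0 : ℝ)..t, (1 + ρ - ∑' j, w j s)⁻¹ := by
  set gv : ℝ → ℝ := fun s => (1 + ρ - ∑' j, v j s)⁻¹ with hgv
  set gw : ℝ → ℝ := fun s => (1 + ρ - ∑' j, w j s)⁻¹ with hgw
  set Fv : ℝ → ℝ := fun x => ∫ s in (0 : ℝ)..x, gv s with hFvdef
  set Fw : ℝ → ℝ := fun x => ∫ s in (0 : ℝ)..x, gw s with hFwdef
  have hintv : ∀ a b : ℝ, 0 ≤ a → 0 ≤ b → IntervalIntegrable gv volume a b := by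
    intro a b ha hb
    rcases le_total a b with h | h
    · exact diss_integrable hu_sum hu_le hv_meas hv_mem ha h
    · exact (diss_integrable hu_sum hu_le hv_meas hv_mem hb h).symm
  have hintw : ∀ a b : ℝ, 0 ≤ a → 0 ≤ b → IntervalIntegrable gw volume a b := by
    intro a b ha hb
    rcases le_total a b with h | h
    · exact diss_integrable hu_sum hu_le hw_meas hw_mem ha h
    · exact (diss_integrable hu_sum hu_le hw_meas hw_mem hb h).symm
  have hsub : ∀ F : ℝ → ℝ, ∀ g : ℝ → ℝ,
      (∀ a b : ℝ, 0 ≤ a → 0 ≤ b → IntervalIntegrable g volume a b) →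
      (F = fun x => ∫ s in (0:ℝ)..x, g s) →
      ∀ x y : ℝ, 0 ≤ x → 0 ≤ y → F y + (∫ s in y..x, g s) = F x := by
    intro F g hint hF x y hx hy
    rw [hF]
    exact intervalIntegral.integral_add_adjacent_intervals (hint 0 y le_rfl hy)
      (hint y x hy hx)
  have hnormle : ∀ (ρ' : ℝ) (v' : ℕ → ℝ → ℝ)
      (_ : ∀ i t, 0 ≤ t → v' i t ∈ Set.Icc 0 (u i)), True := fun _ _ _ => trivial
  have hcont : ∀ F : ℝ → ℝ, ∀ g : ℝ → ℝ, ∀ v' : ℕ → ℝ → ℝ,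
      (∀ i t, 0 ≤ t → v' i t ∈ Set.Icc 0 (u i)) →
      (g = fun s => (1 + ρ - ∑' j, v' j s)⁻¹) →
      (∀ a b : ℝ, 0 ≤ a → 0 ≤ b → IntervalIntegrable g volume a b) →
      (F = fun x => ∫ s in (0:ℝ)..x, g s) →
      ContinuousOn F (Ici (0:ℝ)) := by
    intro F g v' hmem hg hint hF
    refine (LipschitzOnWith.continuousOn (K := 1) ?_)
    rw [lipschitzOnWith_iff_dist_le_mul]
    intro x hx y hy
    have hxy := hsub F g hint hF x y hx hy
    have hbound : ∀ z ∈ Set.uIoc y x, ‖g z‖ ≤ 1 := by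
      intro z hz
      have hz0 : (0:ℝ) ≤ z := le_trans (le_min hy hx) hz.1.le
      rw [hg]
      exact diss_norm_le hu_sum hu_le hmem hz0
    have := intervalIntegral.norm_integral_le_of_norm_le_const hbound
    rw [Real.dist_eq, Real.dist_eq]
    have hFxy : F x - F y = ∫ s in y..x, g s := by linarith
    rw [hFxy]
    simpa [abs_sub_comm x y] using this
  have hcv : ContinuousOn Fv (Ici (0:ℝ)) := hcont Fv gv v hv_mem hgv hintv hFvdef
  have hcw : ContinuousOn Fw (Ici (0:ℝ)) := hcont Fw gw w hw_mem hgw hintw hFwdef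
  intro t ht
  by_contra hlt
  push_neg at hlt
  -- hlt : Fw t < Fv t
  set S : Set ℝ := Icc 0 t ∩ (fun s => Fv s - Fw s) ⁻¹' Iic 0 with hSdef
  have hS0 : (0:ℝ) ∈ S := by
    constructor
    · exact ⟨le_rfl, ht⟩
    · simp only [mem_preimage, mem_Iic, hFvdef, hFwdef]
      simp [intervalIntegral.integral_same]
  have hSclosed : IsClosed S := by
    refine ContinuousOn.preimage_isClosed_of_isClosed ?_ isClosed_Icc isClosed_Iic
    exact (hcv.mono (Icc_subset_Ici_self)).sub (hcw.mono (Icc_subset_Ici_self))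
  have hbdd : BddAbove S := ⟨t, fun s hs => hs.1.2⟩
  set t₀ : ℝ := sSup S with ht₀def
  have ht₀S : t₀ ∈ S := hSclosed.csSup_mem ⟨0, hS0⟩ hbdd
  have ht₀0 : 0 ≤ t₀ := ht₀S.1.1
  have ht₀le : t₀ ≤ t := ht₀S.1.2
  have hFvw0 : Fv t₀ ≤ Fw t₀ := by
    have := ht₀S.2
    simp only [mem_preimage, mem_Iic] at this
    linarith
  have ht₀lt : t₀ < t := by
    rcases lt_or_eq_of_le ht₀le with h | h
    · exact h
    · exfalso; rw [h] at hFvw0; linarith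
  have hIoc : ∀ s ∈ Ioc t₀ t, Fw s < Fv s := by
    intro s hs
    by_contra h
    push_neg at h
    have hsS : s ∈ S := ⟨⟨le_trans ht₀0 hs.1.le, hs.2⟩, by
      simp only [mem_preimage, mem_Iic]; linarith⟩
    exact absurd (le_csSup hbdd hsS) (not_le.2 hs.1)
  have hle : ∀ s ∈ Ioc t₀ t, gv s ≤ gw s := by
    intro s hs
    have hs0 : (0:ℝ) ≤ s := le_trans ht₀0 hs.1.le
    have hvw : ∀ j, v j s ≤ w j s := by
      intro j
      rw [hv_eq j s hs0, hw_eq j s hs0]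
      exact max_le_max (sub_le_sub_left (hIoc s hs).le _) le_rfl
    have hsum : (∑' j, v j s) ≤ ∑' j, w j s :=
      Summable.tsum_le_tsum hvw (diss_summable hu_sum hv_mem hs0) (diss_summable hu_sum hw_mem hs0)
    have h1 : (1:ℝ) ≤ 1 + ρ - ∑' j, w j s := diss_one_le hu_sum hu_le hw_mem hs0
    exact inv_anti₀ (by linarith) (by linarith)
  have hae : gv ≤ᵐ[volume.restrict (Icc t₀ t)] gw := by
    have h1 : ∀ᵐ s ∂volume.restrict (Icc t₀ t), s ∈ Icc t₀ t :=
      ae_restrict_mem measurableSet_Icc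
    have h2 : ∀ᵐ s ∂volume.restrict (Icc t₀ t), s ≠ t₀ := by
      refine ae_restrict_of_ae ?_
      have hset : {s : ℝ | ¬ s ≠ t₀} = {t₀} := by ext x; simp
      rw [ae_iff, hset]
      exact Real.volume_singleton
    filter_upwards [h1, h2] with s hs hne
    exact hle s ⟨lt_of_le_of_ne hs.1 (Ne.symm hne), hs.2⟩
  have hmono := intervalIntegral.integral_mono_ae_restrict (μ := volume) ht₀lt.le
    (hintv t₀ t ht₀0 ht) (hintw t₀ t ht₀0 ht) hae
  have hv2 := hsub Fv gv hintv hFvdef t t₀ ht ht₀0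
  have hw2 := hsub Fw gw hintw hFwdef t t₀ ht ht₀0
  have : Fv t ≤ Fw t := by linarith
  linarith

theorem dissolution_ode_unique
    (ρ : ℝ) (hρ : 0 < ρ)
    (u : ℕ → ℝ) (hu_anti : Antitone u) (hu_nonneg : ∀ i, 0 ≤ u i)
    (hu_sum : Summable u) (hu_le : (∑' i, u i) ≤ ρ)
    (v w : ℕ → ℝ → ℝ)
    (hv_meas : ∀ i, Measurable (v i)) (hw_meas : ∀ i, Measurable (w i))
    (hv_mem : ∀ i t, 0 ≤ t → v i t ∈ Set.Icc 0 (u i))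
    (hw_mem : ∀ i t, 0 ≤ t → w i t ∈ Set.Icc 0 (u i))
    (hv_eq : ∀ i t, 0 ≤ t →
      v i t = max (u i - ∫ s in (0 : ℝ)..t, (1 + ρ - ∑' j, v j s)⁻¹) 0)
    (hw_eq : ∀ i t, 0 ≤ t →
      w i t = max (u i - ∫ s in (0 : ℝ)..t, (1 + ρ - ∑' j, w j s)⁻¹) 0) :
    ∀ i t, 0 ≤ t → v i t = w i t := by
  intro i t ht
  have h1 := diss_key ρ hρ u hu_nonneg hu_sum hu_le v w hv_meas hw_meas hv_mem hw_mem
    hv_eq hw_eq t ht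
  have h2 := diss_key ρ hρ u hu_nonneg hu_sum hu_le w v hw_meas hv_meas hw_mem hv_mem
    hw_eq hv_eq t ht
  rw [hv_eq i t ht, hw_eq i t ht, le_antisymm h1 h2]
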